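/- Let |ψ_H⟩ = (1/√3)(|00⟩ + |10⟩ + |11⟩) ∈ ℂ²⊗ℂ² (the Hardy state) and |−⟩ = (1/√2)(|0⟩ − |1⟩). Then: (i) ⟨−|⊗⟨0| ψ_H = 0; (ii) ⟨0|⊗⟨1| ψ_H = 0; (iii) ⟨1|⊗⟨−| ψ_H = 0; and (iv) |⟨−|⊗⟨−| ψ_H|² = 1/12 > 0. -/

import Mathlib

open BigOperators

/-- Two-qubit basis labels. -/
abbrev Q2 := Fin 2 × Fin 2

/-- `1/√3`. -/
noncomputable def c3 : ℂ := ((Real.sqrt 3 : ℝ) : ℂ)⁻¹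
/-- `1/√2`. -/
noncomputable def c2 : ℂ := ((Real.sqrt 2 : ℝ) : ℂ)⁻¹

/-- Hardy state `|ψ_H⟩ = (1/√3)(|00⟩ + |10⟩ + |11⟩)`. -/
noncomputable def ψH : Q2 → ℂ := fun p =>
  if p = ((0, 0) : Q2) then c3 else if p = ((1, 0) : Q2) then c3
  else if p = ((1, 1) : Q2) then c3 else 0

/-- Single-qubit computational basis vector. -/
def ket1 (x : Fin 2) : Fin 2 → ℂ := fun y => if y = x then 1 else 0

/-- `|−⟩ = (1/√2)(|0⟩ − |1⟩)`. -/
noncomputable def minusv : Fin 2 → ℂ := fun x => if x = 0 then c2 else -c2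

/-- Tensor product of two single-qubit vectors. -/
noncomputable def tens2 (u v : Fin 2 → ℂ) : Q2 → ℂ := fun p => u p.1 * v p.2

/-- Two-qubit inner product. -/
noncomputable def ip2 (w v : Q2 → ℂ) : ℂ := ∑ p : Q2, star (w p) * v p

lemma starc2 : star c2 = c2 := by simp [c2]
lemma c2sq : c2 * c2 = (1/2 : ℂ) := by
  simp only [c2, ← mul_inv]
  norm_cast
  rw [Real.mul_self_sqrt (by norm_num)]
  norm_num

/-- Hardy's logical argument: (i) `⟨−|⊗⟨0| ψ_H = 0`;
(ii) `⟨0|⊗⟨1| ψ_H = 0`; (iii) `⟨1|⊗⟨−| ψ_H = 0`;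
(iv) `|⟨−|⊗⟨−| ψ_H|² = 1/12 > 0`. -/
theorem hardy_orthogonality_facts :
    ip2 (tens2 minusv (ket1 0)) ψH = 0 ∧
    ip2 (tens2 (ket1 0) (ket1 1)) ψH = 0 ∧
    ip2 (tens2 (ket1 1) minusv) ψH = 0 ∧
    ‖ip2 (tens2 minusv minusv) ψH‖ ^ 2 = 1 / 12 ∧
    0 < ‖ip2 (tens2 minusv minusv) ψH‖ ^ 2 := by

  have key : ip2 (tens2 minusv minusv) ψH = c2 * c2 * c3 := by
    simp [ip2, Fintype.sum_prod_type, Fin.sum_univ_succ, tens2, minusv, ket1, ψH, Prod.ext_iff, starc2]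
    exact Or.inl (by show star c2 * star c2 = c2 * c2; rw [starc2])
  have hval : ‖ip2 (tens2 minusv minusv) ψH‖ ^ 2 = 1 / 12 := by
    rw [key, c2sq, norm_mul]
    have : ‖c3‖ = (Real.sqrt 3)⁻¹ := by
      rw [c3, norm_inv, Complex.norm_real, Real.norm_eq_abs, abs_of_nonneg (Real.sqrt_nonneg 3)]
    rw [this]
    rw [show ‖(1/2 : ℂ)‖ = 1/2 by norm_num]
    rw [mul_pow, inv_pow, Real.sq_sqrt (by norm_num : (3:ℝ) ≥ 0)]
    norm_num
  refine ⟨?_, ?_, ?_, ?_, ?_⟩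
  · simp [ip2, Fintype.sum_prod_type, Fin.sum_univ_succ, tens2, minusv, ket1, ψH, Prod.ext_iff, starc2]
  · simp [ip2, Fintype.sum_prod_type, Fin.sum_univ_succ, tens2, minusv, ket1, ψH, Prod.ext_iff, starc2]
  · simp [ip2, Fintype.sum_prod_type, Fin.sum_univ_succ, tens2, minusv, ket1, ψH, Prod.ext_iff, starc2]
  · exact hval
  · rw [hval]; norm_num
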